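/- Let φ = (√5 − 1)/2. For all real p with φ ≤ p < 1, one has s(p) < 1 − p − (1−p)^{(log(1−p)/log(p)) + 2}. -/

import Mathlib

/-- `v p n` is the optimal expected number of heads in the coin game with `n` coins,
each landing heads with probability `p`. -/
noncomputable def v (p : ℝ) : ℕ → ℝ
  | 0 => 0
  | n + 1 =>
      ((n : ℝ) + 1) * p ^ (n + 1) + v p n * (1 - p) ^ (n + 1) +
        ∑ j ∈ (Finset.Icc 1 n).attach,
          (((n + 1).choose j.1 : ℕ) : ℝ) * p ^ (j.1 : ℕ) * (1 - p) ^ (n + 1 - j.1) *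
            ((Finset.Icc 1 j.1).attach.sup'
              (Finset.attach_nonempty_iff.mpr
                (Finset.nonempty_Icc.mpr (Finset.mem_Icc.mp j.2).1))
              (fun i => v p (n + 1 - i.1) + (i.1 : ℝ)))
decreasing_by
  · omega
  · have h := (Finset.mem_Icc.mp i.2).1
    omega

/-- `s p n = v p n - n + 1 - p`. -/
noncomputable def s (p : ℝ) (n : ℕ) : ℝ := v p n - n + 1 - p

open Real Finset

/-- partial products ∏_{m=1}^n (1-p^m) -/
noncomputable def Lb (p : ℝ) (n : ℕ) : ℝ := ∏ m ∈ Finset.range n, (1 - p ^ (m + 1))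

lemma Lb_nonneg {p : ℝ} (hp0 : 0 ≤ p) (hp1 : p ≤ 1) (n : ℕ) : 0 ≤ Lb p n :=
  Finset.prod_nonneg fun m _ => by
    have : p ^ (m + 1) ≤ 1 := pow_le_one₀ hp0 hp1
    linarith

lemma Lb_pos {p : ℝ} (hp0 : 0 ≤ p) (hp1 : p < 1) (n : ℕ) : 0 < Lb p n :=
  Finset.prod_pos fun m _ => by
    have : p ^ (m + 1) < 1 := pow_lt_one₀ hp0 hp1 (Nat.succ_ne_zero m)
    linarith

lemma Lb_succ (p : ℝ) (n : ℕ) : Lb p (n + 1) = Lb p n * (1 - p ^ (n + 1)) :=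
  Finset.prod_range_succ _ _

lemma Lb_anti {p : ℝ} (hp0 : 0 ≤ p) (hp1 : p ≤ 1) {a b : ℕ} (hab : a ≤ b) :
    Lb p b ≤ Lb p a := by
  induction b, hab using Nat.le_induction with
  | base => exact le_refl _
  | succ b hab ihb =>
      rw [Lb_succ]
      have h1 : p ^ (b + 1) ≥ 0 := pow_nonneg hp0 _
      have h2 : 0 ≤ Lb p b := Lb_nonneg hp0 hp1 b
      nlinarith

/-- key analytic inequality via sinh -/
lemma neg_log_le_aux {x : ℝ} (h0 : 0 ≤ x) (h1 : x < 1) :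
    -Real.log (1 - x) ≤ x + x ^ 2 / (2 * (1 - x)) := by
  rcases eq_or_lt_of_le h0 with h | h
  · simp [← h]
  · have hx1 : 0 < 1 - x := by linarith
    have htpos : 0 < -Real.log (1 - x) := by
      have : Real.log (1 - x) < 0 := Real.log_neg hx1 (by linarith)
      linarith
    have hs := Real.self_lt_sinh_iff.mpr htpos
    rw [Real.sinh_eq] at hs
    rw [Real.exp_neg, neg_neg, Real.exp_log hx1] at hs
    have heq : ((1 - x)⁻¹ - (1 - x)) / 2 = x + x ^ 2 / (2 * (1 - x)) := by
      field_simp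
      ring
    linarith [heq ▸ hs.le]

lemma geom_sum_le' {p : ℝ} (hp0 : 0 ≤ p) (hp1 : p < 1) (n : ℕ) :
    ∑ m ∈ Finset.range n, p ^ m ≤ 1 / (1 - p) := by
  have hq : 0 < 1 - p := by linarith
  have h : (∑ m ∈ Finset.range n, p ^ m) * (p - 1) = p ^ n - 1 := geom_sum_mul p n
  have hpn : 0 ≤ p ^ n := pow_nonneg hp0 n
  rw [div_eq_inv_mul, le_inv_mul_iff₀ hq]
  nlinarith

/-- sum of p^{m+1} over range n -/
lemma sum_pow_succ_le {p : ℝ} (hp0 : 0 ≤ p) (hp1 : p < 1) (n : ℕ) :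
    ∑ m ∈ Finset.range n, p ^ (m + 1) ≤ p / (1 - p) := by
  have h1 : ∑ m ∈ Finset.range n, p ^ (m + 1) = p * ∑ m ∈ Finset.range n, p ^ m := by
    rw [Finset.mul_sum]
    refine Finset.sum_congr rfl fun m _ => by ring
  rw [h1, div_eq_mul_one_div]
  exact mul_le_mul_of_nonneg_left (geom_sum_le' hp0 hp1 n) hp0

/-- sum of p^{m+1}/(m+1) over range n bounded by -log(1-p) -/
lemma sum_pow_div_le {p : ℝ} (hp0 : 0 ≤ p) (hp1 : p < 1) (n : ℕ) :
    ∑ m ∈ Finset.range n, p ^ (m + 1) / (m + 1) ≤ -Real.log (1 - p) := by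
  have habs : |p| < 1 := by rw [abs_of_nonneg hp0]; exact hp1
  refine sum_le_hasSum _ (fun i _ => by positivity) (Real.hasSum_pow_div_log_of_abs_lt_one habs)

/-- 1 - p^{m+1} ≥ (m+1)(1-p)p^m -/
lemma one_sub_pow_ge {p : ℝ} (hp0 : 0 ≤ p) (hp1 : p ≤ 1) (m : ℕ) :
    ((m : ℝ) + 1) * (1 - p) * p ^ m ≤ 1 - p ^ (m + 1) := by
  have h : (∑ i ∈ Finset.range (m + 1), p ^ i) * (p - 1) = p ^ (m + 1) - 1 := geom_sum_mul p (m + 1)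
  have hsum : ((m : ℝ) + 1) * p ^ m ≤ ∑ i ∈ Finset.range (m + 1), p ^ i := by
    have h2 : ∀ i ∈ Finset.range (m + 1), p ^ m ≤ p ^ i := fun i hi =>
      pow_le_pow_of_le_one hp0 hp1 (by exact Nat.lt_succ_iff.mp (Finset.mem_range.mp hi))
    calc ((m : ℝ) + 1) * p ^ m = ∑ _i ∈ Finset.range (m + 1), p ^ m := by
          rw [Finset.sum_const, Finset.card_range]; push_cast; ring
      _ ≤ _ := Finset.sum_le_sum h2
  nlinarith [pow_nonneg hp0 m]

/-- per-term bound -/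
lemma key_term {p : ℝ} (hp0 : 0 < p) (hp1 : p < 1) (m : ℕ) :
    -Real.log (1 - p ^ (m + 1)) ≤ p ^ (m + 1) + p / (2 * (1 - p)) * (p ^ (m + 1) / (m + 1)) := by
  have hx0 : (0:ℝ) ≤ p ^ (m + 1) := pow_nonneg hp0.le _
  have hx1 : p ^ (m + 1) < 1 := pow_lt_one₀ hp0.le hp1 (Nat.succ_ne_zero m)
  have h1 := neg_log_le_aux hx0 hx1
  have hg := one_sub_pow_ge hp0.le hp1.le m
  have hq : 0 < 1 - p := by linarith
  have hd : 0 < ((m : ℝ) + 1) * (1 - p) * p ^ m := by positivity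
  have h2 : (p ^ (m + 1)) ^ 2 / (2 * (1 - p ^ (m + 1)))
      ≤ (p ^ (m + 1)) ^ 2 / (2 * (((m : ℝ) + 1) * (1 - p) * p ^ m)) := by
    apply div_le_div_of_nonneg_left (by positivity) (by linarith) (by linarith)
  have h3 : (p ^ (m + 1)) ^ 2 / (2 * (((m : ℝ) + 1) * (1 - p) * p ^ m))
      = p / (2 * (1 - p)) * (p ^ (m + 1) / (m + 1)) := by
    have hpm : (0:ℝ) < p ^ m := pow_pos hp0 m
    field_simp
    ring
  linarith [h3 ▸ h2]

lemma log_Lb (p : ℝ) (hp0 : 0 ≤ p) (hp1 : p < 1) (n : ℕ) :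
    Real.log (Lb p n) = ∑ m ∈ Finset.range n, Real.log (1 - p ^ (m + 1)) := by
  refine Real.log_prod fun m _ => ?_
  have : p ^ (m + 1) < 1 := pow_lt_one₀ hp0 hp1 (Nat.succ_ne_zero m)
  exact ne_of_gt (by linarith)

/-- regime B lower bound, uniform in n -/
lemma Lb_ge_expB {p : ℝ} (hp0 : 0 < p) (hp1 : p < 1) (n : ℕ) :
    Real.exp (-(p / (1 - p) * (1 + -Real.log (1 - p) / 2))) ≤ Lb p n := by
  have hq : 0 < 1 - p := by linarith
  have hLpos := Lb_pos hp0.le hp1 n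
  rw [← Real.exp_log hLpos]
  apply Real.exp_le_exp.mpr
  rw [log_Lb p hp0.le hp1 n]
  have hterm : ∀ m ∈ Finset.range n,
      -Real.log (1 - p ^ (m + 1)) ≤ p ^ (m + 1) + p / (2 * (1 - p)) * (p ^ (m + 1) / (m + 1)) :=
    fun m _ => key_term hp0 hp1 m
  have hsum : ∑ m ∈ Finset.range n, -Real.log (1 - p ^ (m + 1))
      ≤ ∑ m ∈ Finset.range n, (p ^ (m + 1) + p / (2 * (1 - p)) * (p ^ (m + 1) / (m + 1))) :=
    Finset.sum_le_sum hterm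
  rw [Finset.sum_add_distrib] at hsum
  have h1 := sum_pow_succ_le hp0.le hp1 n
  have h2 : ∑ m ∈ Finset.range n, p / (2 * (1 - p)) * (p ^ (m + 1) / (m + 1))
      ≤ p / (2 * (1 - p)) * -Real.log (1 - p) := by
    rw [← Finset.mul_sum]
    exact mul_le_mul_of_nonneg_left (sum_pow_div_le hp0.le hp1 n) (by positivity)
  have h3 : ∑ m ∈ Finset.range n, -Real.log (1 - p ^ (m + 1))
      = -∑ m ∈ Finset.range n, Real.log (1 - p ^ (m + 1)) := by
    rw [← Finset.sum_neg_distrib]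
  have hcomb : -∑ m ∈ Finset.range n, Real.log (1 - p ^ (m + 1))
      ≤ p / (1 - p) + p / (2 * (1 - p)) * -Real.log (1 - p) := by
    rw [← h3]; linarith
  have heq : p / (1 - p) * (1 + -Real.log (1 - p) / 2)
      = p / (1 - p) + p / (2 * (1 - p)) * -Real.log (1 - p) := by
    field_simp
  linarith

/-- regime A lower bound (first factor peeled), for n ≥ 1 -/
lemma Lb_ge_expA {p : ℝ} (hp0 : 0 < p) (hp1 : p < 1) {n : ℕ} (hn : 1 ≤ n) :
    (1 - p) * Real.exp (-(p ^ 2 / (1 - p) + p / (2 * (1 - p)) * (-Real.log (1 - p) - p)))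
      ≤ Lb p n := by
  have hq : 0 < 1 - p := by linarith
  have hLpos := Lb_pos hp0.le hp1 n
  have h0 : (1 - p) * Real.exp (-(p ^ 2 / (1 - p) + p / (2 * (1 - p)) * (-Real.log (1 - p) - p)))
      = Real.exp (Real.log (1 - p) + -(p ^ 2 / (1 - p) + p / (2 * (1 - p)) * (-Real.log (1 - p) - p))) := by
    rw [Real.exp_add, Real.exp_log hq]
  rw [h0, ← Real.exp_log hLpos]
  apply Real.exp_le_exp.mpr
  rw [log_Lb p hp0.le hp1 n]
  -- split off m = 0
  have hsplit : ∑ m ∈ Finset.range n, Real.log (1 - p ^ (m + 1))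
      = Real.log (1 - p ^ (0 + 1)) + ∑ m ∈ Finset.Ico 1 n, Real.log (1 - p ^ (m + 1)) := by
    rw [Finset.range_eq_Ico, Finset.sum_eq_sum_Ico_succ_bot (by omega)]
  rw [hsplit]
  have hp01 : (1:ℝ) - p ^ (0 + 1) = 1 - p := by ring
  rw [hp01]
  have key : -∑ m ∈ Finset.Ico 1 n, Real.log (1 - p ^ (m + 1))
      ≤ p ^ 2 / (1 - p) + p / (2 * (1 - p)) * (-Real.log (1 - p) - p) := by
    have hterm : ∑ m ∈ Finset.Ico 1 n, -Real.log (1 - p ^ (m + 1))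
        ≤ ∑ m ∈ Finset.Ico 1 n, (p ^ (m + 1) + p / (2 * (1 - p)) * (p ^ (m + 1) / (m + 1))) :=
      Finset.sum_le_sum fun m _ => key_term hp0 hp1 m
    rw [Finset.sum_add_distrib] at hterm
    -- sums over Ico 1 n = sums over range n minus m = 0 term
    have e1 : ∑ m ∈ Finset.range n, p ^ (m + 1)
        = p ^ (0 + 1) + ∑ m ∈ Finset.Ico 1 n, p ^ (m + 1) := by
      rw [Finset.range_eq_Ico]
      exact Finset.sum_eq_sum_Ico_succ_bot (by omega : 0 < n) _
    have e2 : ∑ m ∈ Finset.range n, p / (2 * (1 - p)) * (p ^ (m + 1) / (m + 1))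
        = p / (2 * (1 - p)) * (p ^ (0 + 1) / ((0:ℕ) + 1))
          + ∑ m ∈ Finset.Ico 1 n, p / (2 * (1 - p)) * (p ^ (m + 1) / (m + 1)) := by
      rw [Finset.range_eq_Ico]
      exact Finset.sum_eq_sum_Ico_succ_bot (by omega : 0 < n) _
    have h1 := sum_pow_succ_le hp0.le hp1 n
    have h2 : ∑ m ∈ Finset.range n, p / (2 * (1 - p)) * (p ^ (m + 1) / (m + 1))
        ≤ p / (2 * (1 - p)) * -Real.log (1 - p) := by
      rw [← Finset.mul_sum]
      exact mul_le_mul_of_nonneg_left (sum_pow_div_le hp0.le hp1 n) (by positivity)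
    have h3 : ∑ m ∈ Finset.Ico 1 n, -Real.log (1 - p ^ (m + 1))
        = -∑ m ∈ Finset.Ico 1 n, Real.log (1 - p ^ (m + 1)) := by
      rw [← Finset.sum_neg_distrib]
    have heq : p ^ 2 / (1 - p) = p / (1 - p) - p := by field_simp; ring
    rw [e1] at h1
    rw [e2] at h2
    rw [← h3, heq]
    have expand : p / (2 * (1 - p)) * (-Real.log (1 - p) - p)
        = p / (2 * (1 - p)) * -Real.log (1 - p) - p / (2 * (1 - p)) * p := by ring
    rw [expand]
    norm_num at hterm h1 h2 ⊢
    linarith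
  linarith

lemma v_le {p : ℝ} (hp0 : 0 ≤ p) (hp1 : p ≤ 1) : ∀ n : ℕ, 1 ≤ n → v p n ≤ n - Lb p n := by
  intro n
  induction n using Nat.strong_induction_on with
  | _ n ih =>
    match n with
    | 0 => intro h; exact absurd h (by norm_num)
    | (N + 1) =>
      intro _
      rcases Nat.eq_zero_or_pos N with hN | hN1
      · subst hN
        rw [v]
        rw [v]
        have hzero : (∑ j ∈ (Finset.Icc 1 0).attach,
            (((0 + 1).choose j.1 : ℕ) : ℝ) * p ^ (j.1 : ℕ) * (1 - p) ^ (0 + 1 - j.1) *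
              ((Finset.Icc 1 j.1).attach.sup'
                (Finset.attach_nonempty_iff.mpr
                  (Finset.nonempty_Icc.mpr (Finset.mem_Icc.mp j.2).1))
                (fun i => v p (0 + 1 - i.1) + (i.1 : ℝ)))) = 0 :=
          Finset.sum_eq_zero fun j _ => by
            have := Finset.mem_Icc.mp j.2
            omega
        rw [hzero]
        simp [Lb]
      · -- step case, N ≥ 1
        have hq0 : (0:ℝ) ≤ 1 - p := by linarith
        rw [v]
        set L := Lb p N with hL
        -- bound the sup-sum
        have hsum : (∑ j ∈ (Finset.Icc 1 N).attach,
            (((N + 1).choose j.1 : ℕ) : ℝ) * p ^ (j.1 : ℕ) * (1 - p) ^ (N + 1 - j.1) *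
              ((Finset.Icc 1 j.1).attach.sup'
                (Finset.attach_nonempty_iff.mpr
                  (Finset.nonempty_Icc.mpr (Finset.mem_Icc.mp j.2).1))
                (fun i => v p (N + 1 - i.1) + (i.1 : ℝ))))
            ≤ ∑ j ∈ (Finset.Icc 1 N).attach,
            (((N + 1).choose j.1 : ℕ) : ℝ) * p ^ (j.1 : ℕ) * (1 - p) ^ (N + 1 - j.1) *
              (((N:ℝ) + 1) - L) := by
          refine Finset.sum_le_sum fun j _ => ?_
          have hcoef : (0:ℝ) ≤ (((N + 1).choose j.1 : ℕ) : ℝ) * p ^ (j.1 : ℕ) * (1 - p) ^ (N + 1 - j.1) := by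
            positivity
          refine mul_le_mul_of_nonneg_left ?_ hcoef
          refine Finset.sup'_le _ _ fun i _ => ?_
          have hi1 : 1 ≤ i.1 := (Finset.mem_Icc.mp i.2).1
          have hij : i.1 ≤ j.1 := (Finset.mem_Icc.mp i.2).2
          have hjN : j.1 ≤ N := (Finset.mem_Icc.mp j.2).2
          have hIH := ih (N + 1 - i.1) (by omega) (by omega)
          have hcast : ((N + 1 - i.1 : ℕ) : ℝ) = ((N:ℝ) + 1) - (i.1 : ℝ) := by
            rw [Nat.cast_sub (by omega)]
            push_cast
            ring
          have hLb : L ≤ Lb p (N + 1 - i.1) := Lb_anti hp0 hp1 (by omega)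
          rw [hcast] at hIH
          linarith
        -- the coefficient sum equals 1 - p^{N+1} - q^{N+1}
        have hattach : ∑ j ∈ (Finset.Icc 1 N).attach,
            (((N + 1).choose j.1 : ℕ) : ℝ) * p ^ (j.1 : ℕ) * (1 - p) ^ (N + 1 - j.1) *
              (((N:ℝ) + 1) - L)
            = (∑ j ∈ Finset.Icc 1 N,
                (((N + 1).choose j : ℕ) : ℝ) * p ^ j * (1 - p) ^ (N + 1 - j)) * (((N:ℝ) + 1) - L) := by
          rw [← Finset.sum_mul]
          congr 1
          exact Finset.sum_attach (Finset.Icc 1 N)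
            (fun j => (((N + 1).choose j : ℕ) : ℝ) * p ^ j * (1 - p) ^ (N + 1 - j))
        have hbin : ∑ j ∈ Finset.Icc 1 N,
            (((N + 1).choose j : ℕ) : ℝ) * p ^ j * (1 - p) ^ (N + 1 - j)
            = 1 - p ^ (N + 1) - (1 - p) ^ (N + 1) := by
          have h := add_pow p (1 - p) (N + 1)
          rw [show p + (1 - p) = 1 by ring, one_pow] at h
          have hsub : Finset.Icc 1 N ⊆ Finset.range (N + 2) := fun x hx => by
            simp only [Finset.mem_Icc] at hx
            simp only [Finset.mem_range]
            omega
          have hsd : Finset.range (N + 2) \ Finset.Icc 1 N = {0, N + 1} := by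
            ext x
            simp only [Finset.mem_sdiff, Finset.mem_range, Finset.mem_Icc, Finset.mem_insert,
              Finset.mem_singleton]
            omega
          have hss := Finset.sum_sdiff (f := fun k =>
            (((N + 1).choose k : ℕ) : ℝ) * p ^ k * (1 - p) ^ (N + 1 - k)) hsub
          rw [hsd] at hss
          have hpair : ∑ x ∈ ({0, N + 1} : Finset ℕ),
              (((N + 1).choose x : ℕ) : ℝ) * p ^ x * (1 - p) ^ (N + 1 - x)
              = (1 - p) ^ (N + 1) + p ^ (N + 1) := by
            rw [Finset.sum_pair (by omega : 0 ≠ N + 1)]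
            simp
          have hfull : ∑ k ∈ Finset.range (N + 2),
              (((N + 1).choose k : ℕ) : ℝ) * p ^ k * (1 - p) ^ (N + 1 - k) = 1 := by
            have hc : ∑ k ∈ Finset.range (N + 2),
                (((N + 1).choose k : ℕ) : ℝ) * p ^ k * (1 - p) ^ (N + 1 - k)
                = ∑ k ∈ Finset.range (N + 2), p ^ k * (1 - p) ^ (N + 1 - k) * (((N + 1).choose k : ℕ) : ℝ) :=
              Finset.sum_congr rfl fun k _ => by ring
            rw [hc]
            exact h.symm
          rw [hpair, hfull] at hss
          linarith
        rw [hbin] at hattach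
        -- bound the v p N term
        have hvN : v p N * (1 - p) ^ (N + 1) ≤ ((N:ℝ) - L) * (1 - p) ^ (N + 1) :=
          mul_le_mul_of_nonneg_right (ih N (by omega) hN1) (pow_nonneg hq0 _)
        -- final algebra
        have hLb1 : Lb p (N + 1) = L * (1 - p ^ (N + 1)) := Lb_succ p N
        have hcastN : ((N + 1 : ℕ) : ℝ) = (N:ℝ) + 1 := by push_cast; ring
        rw [hcastN, hLb1]
        have hBnn : (0:ℝ) ≤ (1 - p) ^ (N + 1) := pow_nonneg hq0 _
        nlinarith [hsum, hattach ▸ hsum]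

lemma s_le {p : ℝ} (hp0 : 0 < p) (hp1 : p < 1) {n : ℕ} (hn : 1 ≤ n) :
    s p n ≤ 1 - p - Lb p n := by
  have h := v_le hp0.le hp1.le n hn
  simp only [s]
  linarith

set_option maxHeartbeats 1600000 in
theorem coin_game_s_upper_bound_phi (S : ℝ → ℝ)
    (hS : ∀ p : ℝ, 1 / 2 ≤ p → p ≤ 1 →
      Filter.Tendsto (fun n : ℕ => s p n) Filter.atTop (nhds (S p)))
    (p : ℝ) (hp1 : (Real.sqrt 5 - 1) / 2 ≤ p) (hp2 : p < 1) :
    S p < 1 - p - (1 - p) ^ (Real.log (1 - p) / Real.log p + 2 : ℝ) := by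
  have h5 : Real.sqrt 5 ^ 2 = 5 := Real.sq_sqrt (by norm_num)
  have h5n : (0:ℝ) ≤ Real.sqrt 5 := Real.sqrt_nonneg 5
  have hphi : (1:ℝ) / 2 ≤ p := by nlinarith
  have hp0 : (0:ℝ) < p := by linarith
  have hq0 : (0:ℝ) < 1 - p := by linarith
  have hqlt1 : (1:ℝ) - p < 1 := by linarith
  have hlogq : Real.log (1 - p) < 0 := Real.log_neg hq0 hqlt1
  have hlogp : Real.log p < 0 := Real.log_neg hp0 hp2
  have hu0 : 0 < -Real.log (1 - p) := by linarith
  -- u > p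
  have hup : p < -Real.log (1 - p) := by
    have := Real.log_lt_sub_one_of_pos hq0 (by linarith : (1:ℝ) - p ≠ 1)
    linarith
  -- q ≤ p ^ 2
  have hqp2 : 1 - p ≤ p ^ 2 := by nlinarith
  -- limit bound machinery
  have hlim : ∀ X : ℝ, (∀ n : ℕ, 1 ≤ n → X ≤ Lb p n) → S p ≤ 1 - p - X := by
    intro X hX
    refine le_of_tendsto (hS p hphi hp2.le) (Filter.eventually_atTop.mpr ⟨1, fun n hn => ?_⟩)
    have h1 := s_le hp0 hp2 hn
    have h2 := hX n hn
    linarith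
  -- RHS as exponential
  have hRHS : (1 - p) ^ (Real.log (1 - p) / Real.log p + 2 : ℝ)
      = Real.exp ((Real.log (1 - p) / Real.log p + 2) * Real.log (1 - p)) := by
    rw [Real.rpow_def_of_pos hq0]
    ring_nf
  rcases le_or_gt p (3 / 4) with hA | hB
  · -- Regime A : φ ≤ p ≤ 3/4
    set X := (1 - p) * Real.exp (-(p ^ 2 / (1 - p) +
        p / (2 * (1 - p)) * (-Real.log (1 - p) - p))) with hXdef
    have hSle : S p ≤ 1 - p - X := hlim X fun n hn => Lb_ge_expA hp0 hp2 hn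
    have hdiv : 2 ≤ Real.log (1 - p) / Real.log p := by
      rw [le_div_iff_of_neg hlogp]
      calc Real.log (1 - p) ≤ Real.log (p ^ 2) := Real.log_le_log hq0 hqp2
        _ = 2 * Real.log p := by rw [Real.log_pow]; push_cast; ring
    have hexp1 : (Real.log (1 - p) / Real.log p + 2) * Real.log (1 - p)
        ≤ 4 * Real.log (1 - p) := by nlinarith
    -- show exp(4 log q) < X
    have hXeq : X = Real.exp (Real.log (1 - p) + -(p ^ 2 / (1 - p) +
        p / (2 * (1 - p)) * (-Real.log (1 - p) - p))) := by
      rw [Real.exp_add, Real.exp_log hq0]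
    have hcore : 4 * Real.log (1 - p) < Real.log (1 - p) + -(p ^ 2 / (1 - p) +
        p / (2 * (1 - p)) * (-Real.log (1 - p) - p)) := by
      have hexpand : p ^ 2 / (1 - p) + p / (2 * (1 - p)) * (-Real.log (1 - p) - p)
          = (2 * p ^ 2 + p * (-Real.log (1 - p) - p)) / (2 * (1 - p)) := by
        field_simp
      have hgoal : (2 * p ^ 2 + p * (-Real.log (1 - p) - p)) / (2 * (1 - p))
          < 3 * (-Real.log (1 - p)) := by
        rw [div_lt_iff₀ (by positivity : (0:ℝ) < 2 * (1 - p))]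
        nlinarith [hup, mul_lt_mul_of_pos_right hup (show (0:ℝ) < 6 * (1 - p) - p by nlinarith)]
      linarith
    have hfin : (1 - p) ^ (Real.log (1 - p) / Real.log p + 2 : ℝ) < X := by
      rw [hRHS, hXeq]
      exact Real.exp_lt_exp.mpr (lt_of_le_of_lt hexp1 hcore)
    linarith
  · -- Regime B : 3/4 < p
    set X := Real.exp (-(p / (1 - p) * (1 + -Real.log (1 - p) / 2))) with hXdef
    have hSle : S p ≤ 1 - p - X := hlim X fun n _ => Lb_ge_expB hp0 hp2 n
    have hq14 : 1 - p ≤ 1 / 4 := by linarith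
    have hu139 : (1.386:ℝ) ≤ -Real.log (1 - p) := by
      have h1 : Real.log (1 - p) ≤ Real.log (1 / 4) := Real.log_le_log hq0 hq14
      have h2 : Real.log ((1:ℝ) / 4) = -(2 * Real.log 2) := by
        rw [show (1/4 : ℝ) = (2 ^ 2)⁻¹ by norm_num, Real.log_inv, Real.log_pow]
        push_cast
        ring
      have := Real.log_two_gt_d9
      rw [h2] at h1
      linarith
    have hu2 : 1 + -Real.log (1 - p) / 2 ≤ (-Real.log (1 - p)) ^ 2 := by nlinarith
    -- -log p ≤ q(2-q)/(2p)
    have hwp : -Real.log p ≤ (1 - p) * (2 - (1 - p)) / (2 * p) := by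
      have h := neg_log_le_aux (show (0:ℝ) ≤ 1 - p by linarith) (by linarith : 1 - p < 1)
      rw [show (1:ℝ) - (1 - p) = p by ring] at h
      have heq : (1 - p) + (1 - p) ^ 2 / (2 * p)
          = (1 - p) * (2 - (1 - p)) / (2 * p) := by
        field_simp
        ring
      linarith [heq ▸ h]
    have hlogp_pos : 0 < -Real.log p := by linarith
    have hApos : (0:ℝ) < (1 - p) * (2 - (1 - p)) / (2 * p) := by
      have : (0:ℝ) < 2 - (1 - p) := by linarith
      positivity
    -- u²/log p ≤ -(u²/A)
    have hinv : (-Real.log (1 - p)) ^ 2 / Real.log p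
        ≤ -((-Real.log (1 - p)) ^ 2 / ((1 - p) * (2 - (1 - p)) / (2 * p))) := by
      have h1 : (-Real.log (1 - p)) ^ 2 / ((1 - p) * (2 - (1 - p)) / (2 * p))
          ≤ (-Real.log (1 - p)) ^ 2 / (-Real.log p) :=
        div_le_div_of_nonneg_left (sq_nonneg _) hlogp_pos hwp
      have h2 : (-Real.log (1 - p)) ^ 2 / Real.log p
          = -((-Real.log (1 - p)) ^ 2 / (-Real.log p)) := by
        field_simp
      rw [h2]
      linarith
    -- final exponent comparison
    have hcore : (Real.log (1 - p) / Real.log p + 2) * Real.log (1 - p)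
        < -(p / (1 - p) * (1 + -Real.log (1 - p) / 2)) := by
      have hLHS : (Real.log (1 - p) / Real.log p + 2) * Real.log (1 - p)
          = (-Real.log (1 - p)) ^ 2 / Real.log p + 2 * Real.log (1 - p) := by
        ring
      rw [hLHS]
      have hAeq : (-Real.log (1 - p)) ^ 2 / ((1 - p) * (2 - (1 - p)) / (2 * p))
          = 2 * p * (-Real.log (1 - p)) ^ 2 / ((1 - p) * (2 - (1 - p))) := by
        field_simp
      -- (p/q)(1+u/2) ≤ (p/q)u² ≤ 2pu²/(q(2-q))
      have hs1 : p / (1 - p) * (1 + -Real.log (1 - p) / 2)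
          ≤ p / (1 - p) * (-Real.log (1 - p)) ^ 2 :=
        mul_le_mul_of_nonneg_left hu2 (by positivity)
      have hs2 : p / (1 - p) * (-Real.log (1 - p)) ^ 2
          ≤ 2 * p * (-Real.log (1 - p)) ^ 2 / ((1 - p) * (2 - (1 - p))) := by
        have hden : (0:ℝ) < (1 - p) * (2 - (1 - p)) := by nlinarith
        rw [div_mul_eq_mul_div, div_le_div_iff₀ hq0 hden]
        nlinarith [mul_nonneg (mul_nonneg hp0.le (sq_nonneg (-Real.log (1 - p))))
          (sq_nonneg (1 - p))]
      have h2u : 0 < 2 * (-Real.log (1 - p)) := by linarith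
      have : 2 * Real.log (1 - p) = -(2 * (-Real.log (1 - p))) := by ring
      rw [this]
      rw [hAeq] at hinv
      linarith
    have hfin : (1 - p) ^ (Real.log (1 - p) / Real.log p + 2 : ℝ) < X := by
      rw [hRHS, hXdef]
      exact Real.exp_lt_exp.mpr hcore
    linarith
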